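/- In the regime change game, a symmetric outcome p* minimizes the utilitarian uninformed welfare w̲(p) over all symmetric outcomes p ∈ Δ^sy_π(A×Θ) if and only if: (1) p*({(a,θ) : θ−1 ≤ Σ_i a_i ≤ θ}) = 0 (no investor is ever pivotal), and (2) p*({(a,θ) : Σ_i a_i > θ}) = k/(1+x) (the attack succeeds with probability exactly k/(1+x)). -/

import Mathlib

open Finset

/-- The number of attackers in an action profile. -/
def attackers {n : ℕ} (a : Fin n → Bool) : ℕ :=
  (univ.filter fun j => a j = true).card

/-- Payoffs in the regime change game with speculation cost `k` and
externality `x`: attacking (`true`) pays `1−k` if the attack succeeds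
(at least `θv` attackers) and `−k` otherwise; not attacking pays `−x` if the
attack succeeds and `0` otherwise. -/
noncomputable def rcU {n : ℕ} (k x : ℝ) (i : Fin n) (a : Fin n → Bool)
    (θv : ℕ) : ℝ :=
  if a i = true then (if θv ≤ attackers a then 1 - k else -k)
  else (if θv ≤ attackers a then -x else 0)

/-- `p` is an outcome with `Θ`-marginal `π`. -/
def IsOutcome {n : ℕ} {Θ : Type} [Fintype Θ] (π : Θ → ℝ)
    (p : ((Fin n → Bool) × Θ) → ℝ) : Prop :=
  (∀ y, 0 ≤ p y) ∧ ∀ θ, (∑ a : Fin n → Bool, p (a, θ)) = π θ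

/-- A symmetric outcome: invariant under permutations of the players. -/
def SymmOutcome {n : ℕ} {Θ : Type} [Fintype Θ]
    (p : ((Fin n → Bool) × Θ) → ℝ) : Prop :=
  ∀ (φ : Equiv.Perm (Fin n)) (a : Fin n → Bool) (θ : Θ), p (a ∘ φ, θ) = p (a, θ)

/-- Utilitarian uninformed welfare `w̲(p)` in the regime change game. -/
noncomputable def wundRC {n : ℕ} {Θ : Type} [Fintype Θ] (k x : ℝ)
    (val : Θ → ℕ) (p : ((Fin n → Bool) × Θ) → ℝ) : ℝ :=
  ∑ i : Fin n,
    max (∑ y : (Fin n → Bool) × Θ,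
          rcU k x i (Function.update y.1 i false) (val y.2) * p y)
        (∑ y : (Fin n → Bool) × Θ,
          rcU k x i (Function.update y.1 i true) (val y.2) * p y)

lemma attackers_sum {n : ℕ} (a : Fin n → Bool) :
    attackers a = ∑ j, if a j = true then 1 else 0 := by
  rw [attackers, Finset.card_filter]

lemma attackers_update {n : ℕ} (a : Fin n → Bool) (i : Fin n) (b : Bool) :
    attackers (Function.update a i b)
      = (if b = true then 1 else 0) + ∑ j ∈ univ.erase i, (if a j = true then 1 else 0) := by
  rw [attackers_sum, ← Finset.add_sum_erase _ _ (Finset.mem_univ i)]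
  congr 1
  · simp
  · exact Finset.sum_congr rfl fun j hj => by
      rw [Function.update_of_ne (Finset.ne_of_mem_erase hj)]

lemma attackers_update_true {n : ℕ} (a : Fin n → Bool) (i : Fin n) :
    attackers (Function.update a i true) = attackers (Function.update a i false) + 1 := by
  rw [attackers_update, attackers_update]; simp [add_comm]

lemma attackers_self {n : ℕ} (a : Fin n → Bool) (i : Fin n) :
    attackers a = (if a i = true then 1 else 0) + attackers (Function.update a i false) := by
  conv_lhs => rw [← Function.update_eq_self i a]
  rw [attackers_update, attackers_update]; simp

lemma attackers_le {n : ℕ} (a : Fin n → Bool) : attackers a ≤ n := by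
  simpa [attackers] using (Finset.card_filter_le univ _).trans (by simp)

lemma attackers_allTrue {n : ℕ} : attackers (fun _ : Fin n => true) = n := by
  simp [attackers]

lemma attackers_allFalse {n : ℕ} : attackers (fun _ : Fin n => false) = 0 := by
  simp [attackers]

/-- number of other attackers -/
def tcnt {n : ℕ} (a : Fin n → Bool) (i : Fin n) : ℕ :=
  attackers (Function.update a i false)

lemma attackers_tcnt {n : ℕ} (a : Fin n → Bool) (i : Fin n) :
    attackers a = (if a i = true then 1 else 0) + tcnt a i := attackers_self a i

noncomputable def AA {n : ℕ} {Θ : Type} [Fintype Θ] (val : Θ → ℕ) (i : Fin n)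
    (p : ((Fin n → Bool) × Θ) → ℝ) : ℝ :=
  ∑ y : (Fin n → Bool) × Θ, if val y.2 ≤ tcnt y.1 i then p y else 0

noncomputable def BB {n : ℕ} {Θ : Type} [Fintype Θ] (val : Θ → ℕ) (i : Fin n)
    (p : ((Fin n → Bool) × Θ) → ℝ) : ℝ :=
  ∑ y : (Fin n → Bool) × Θ, if val y.2 = tcnt y.1 i + 1 then p y else 0

lemma rcU_false {n : ℕ} (k x : ℝ) (i : Fin n) (a : Fin n → Bool) (v : ℕ) :
    rcU k x i (Function.update a i false) v
      = if v ≤ tcnt a i then -x else 0 := by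
  simp [rcU, tcnt]
  exact if_congr Iff.rfl rfl rfl

lemma rcU_true {n : ℕ} (k x : ℝ) (i : Fin n) (a : Fin n → Bool) (v : ℕ) :
    rcU k x i (Function.update a i true) v
      = if v ≤ tcnt a i + 1 then 1 - k else -k := by
  simp [rcU, tcnt, attackers_update_true]
  exact if_congr Iff.rfl rfl rfl

lemma total_one {n : ℕ} {Θ : Type} [Fintype Θ] {π : Θ → ℝ}
    {p : ((Fin n → Bool) × Θ) → ℝ} (hp : IsOutcome π p) (hπ1 : ∑ θ, π θ = 1) :
    (∑ y : (Fin n → Bool) × Θ, p y) = 1 := by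
  rw [Fintype.sum_prod_type, Finset.sum_comm]
  simp only [hp.2, hπ1]

lemma wund_eq {n : ℕ} {Θ : Type} [Fintype Θ] (val : Θ → ℕ) (π : Θ → ℝ) (k x : ℝ)
    (p : ((Fin n → Bool) × Θ) → ℝ) (hp : IsOutcome π p) (hπ1 : ∑ θ, π θ = 1) :
    wundRC k x val p = ∑ i : Fin n,
      max (-x * AA val i p) (AA val i p + BB val i p - k) := by
  unfold wundRC
  refine Finset.sum_congr rfl fun i _ => ?_
  have h0 : (∑ y : (Fin n → Bool) × Θ,
      rcU k x i (Function.update y.1 i false) (val y.2) * p y) = -x * AA val i p := by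
    rw [AA, Finset.mul_sum]
    refine Finset.sum_congr rfl fun y _ => ?_
    rw [rcU_false]; split_ifs <;> ring
  have h1 : (∑ y : (Fin n → Bool) × Θ,
      rcU k x i (Function.update y.1 i true) (val y.2) * p y)
      = AA val i p + BB val i p - k := by
    have : ∀ y : (Fin n → Bool) × Θ,
        rcU k x i (Function.update y.1 i true) (val y.2) * p y
        = ((if val y.2 ≤ tcnt y.1 i then p y else 0)
           + (if val y.2 = tcnt y.1 i + 1 then p y else 0)) + (-k) * p y := by
      intro y
      rw [rcU_true]
      split_ifs with h1 h2 h3 <;> first | (exfalso; omega) | ring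
    rw [Finset.sum_congr rfl fun y _ => this y, Finset.sum_add_distrib,
      Finset.sum_add_distrib, ← Finset.mul_sum, total_one hp hπ1]
    rw [AA, BB]; ring
  rw [h0, h1]

lemma max_lb (k x A B : ℝ) (hx : 0 < x) (hB : 0 ≤ B) :
    -(x * k) / (1 + x) ≤ max (-x * A) (A + B - k) := by
  have h1x : (0:ℝ) < 1 + x := by linarith
  rcases le_total (A * (1 + x)) k with h | h
  · refine le_max_of_le_left ?_
    rw [div_le_iff₀ h1x]
    nlinarith [mul_le_mul_of_nonneg_left h hx.le]
  · refine le_max_of_le_right ?_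
    rw [div_le_iff₀ h1x]
    nlinarith [mul_nonneg hB h1x.le]

lemma max_eq_extract (k x A B : ℝ) (hx : 0 < x) (hB : 0 ≤ B)
    (hle : max (-x * A) (A + B - k) ≤ -(x * k) / (1 + x)) :
    A = k / (1 + x) ∧ B = 0 := by
  have h1x : (0:ℝ) < 1 + x := by linarith
  have h1 : -x * A ≤ -(x * k) / (1 + x) := le_trans (le_max_left _ _) hle
  have h2 : A + B - k ≤ -(x * k) / (1 + x) := le_trans (le_max_right _ _) hle
  rw [le_div_iff₀ h1x] at h1 h2
  have hA1 : k ≤ A * (1 + x) := by nlinarith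
  have hA2 : (A + B) * (1 + x) ≤ k := by nlinarith
  have hB0 : B = 0 := by nlinarith
  constructor
  · rw [eq_div_iff (ne_of_gt h1x)]; nlinarith
  · exact hB0

section Events
variable {n : ℕ} {Θ : Type} [Fintype Θ] (val : Θ → ℕ)

noncomputable def Piv (p : ((Fin n → Bool) × Θ) → ℝ) : ℝ :=
  ∑ y : (Fin n → Bool) × Θ,
    if val y.2 ≤ attackers y.1 + 1 ∧ attackers y.1 ≤ val y.2 then p y else 0

noncomputable def Suc (p : ((Fin n → Bool) × Θ) → ℝ) : ℝ :=
  ∑ y : (Fin n → Bool) × Θ, if val y.2 < attackers y.1 then p y else 0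

variable {p : ((Fin n → Bool) × Θ) → ℝ}

lemma piv_pointwise (hp0 : ∀ y, 0 ≤ p y) (hpiv : Piv val p = 0) :
    ∀ y : (Fin n → Bool) × Θ,
      (val y.2 ≤ attackers y.1 + 1 ∧ attackers y.1 ≤ val y.2) → p y = 0 := by
  intro y hy
  have h := (Finset.sum_eq_zero_iff_of_nonneg (fun z _ => by
      split_ifs; exacts [hp0 z, le_refl 0])).mp hpiv y (Finset.mem_univ y)
  simpa [if_pos hy] using h

lemma BB_eq_zero_of_piv (i : Fin n)
    (hpt : ∀ y : (Fin n → Bool) × Θ,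
      (val y.2 ≤ attackers y.1 + 1 ∧ attackers y.1 ≤ val y.2) → p y = 0) :
    BB val i p = 0 := by
  refine Finset.sum_eq_zero fun y _ => ?_
  split_ifs with h
  · refine hpt y ?_
    have hd := attackers_tcnt y.1 i
    rcases Classical.em (y.1 i = true) with hb | hb <;> simp [hb] at hd <;> omega
  · rfl

lemma AA_eq_suc (i : Fin n)
    (hpt : ∀ y : (Fin n → Bool) × Θ,
      (val y.2 ≤ attackers y.1 + 1 ∧ attackers y.1 ≤ val y.2) → p y = 0) :
    AA val i p = Suc val p := by
  refine Finset.sum_congr rfl fun y _ => ?_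
  by_cases hy : p y = 0
  · simp [hy]
  · have hnp : ¬ (val y.2 ≤ attackers y.1 + 1 ∧ attackers y.1 ≤ val y.2) :=
      fun h => hy (hpt y h)
    have hd := attackers_tcnt y.1 i
    have : (val y.2 ≤ tcnt y.1 i) ↔ (val y.2 < attackers y.1) := by
      rcases Classical.em (y.1 i = true) with h | h <;> simp [h] at hd <;> omega
    simp only [this]

lemma piv_zero_of_BB (hp0 : ∀ y, 0 ≤ p y) (hn : 4 ≤ n) (hval : ∀ θ, 2 ≤ val θ ∧ val θ + 1 < n)
    (hBB : ∀ i : Fin n, BB val i p = 0) : Piv val p = 0 := by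
  refine Finset.sum_eq_zero fun y _ => ?_
  split_ifs with h
  · -- pivotal: show p y = 0
    obtain ⟨h1, h2⟩ := h
    have hv := hval y.2
    -- find suitable i
    have hkey : ∃ i : Fin n, val y.2 = tcnt y.1 i + 1 := by
      rcases Nat.lt_or_ge (attackers y.1) (val y.2) with hc | hc
      · -- attackers = val - 1 : find i with a i = false
        have hlt : attackers y.1 < n := by omega
        have : ∃ i : Fin n, y.1 i = false := by
          by_contra hcon
          push_neg at hcon
          have : attackers y.1 = n := by
            have : (univ.filter fun j => y.1 j = true) = (univ : Finset (Fin n)) :=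
              Finset.filter_true_of_mem fun j _ => by simpa using hcon j
            rw [attackers, this, Finset.card_univ, Fintype.card_fin]
          omega
        obtain ⟨i, hi⟩ := this
        refine ⟨i, ?_⟩
        have hd := attackers_tcnt y.1 i
        rw [hi] at hd; simp at hd; omega
      · -- attackers = val : find i with a i = true
        have hpos : 0 < attackers y.1 := by omega
        have : ∃ i : Fin n, y.1 i = true := by
          by_contra hcon
          push_neg at hcon
          have : attackers y.1 = 0 := by
            rw [attackers, Finset.card_eq_zero]
            refine Finset.filter_eq_empty_iff.mpr fun j _ => ?_
            simpa using hcon j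
          omega
        obtain ⟨i, hi⟩ := this
        refine ⟨i, ?_⟩
        have hd := attackers_tcnt y.1 i
        rw [hi] at hd; simp at hd; omega
    obtain ⟨i, hi⟩ := hkey
    have h := (Finset.sum_eq_zero_iff_of_nonneg (fun z _ => by
        split_ifs; exacts [hp0 z, le_refl 0])).mp (hBB i) y (Finset.mem_univ y)
    simpa [if_pos hi] using h
  · rfl

end Events

section Value
variable {n : ℕ} {Θ : Type} [Fintype Θ] {val : Θ → ℕ} {π : Θ → ℝ}
  {k x : ℝ}

lemma BB_nonneg {p : ((Fin n → Bool) × Θ) → ℝ} (hp0 : ∀ y, 0 ≤ p y) (i : Fin n) :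
    0 ≤ BB val i p :=
  Finset.sum_nonneg fun y _ => by split_ifs; exacts [hp0 y, le_refl 0]

/-- lower bound for any outcome -/
lemma wund_lb (hπ1 : ∑ θ, π θ = 1) (hx : 0 < x)
    (p : ((Fin n → Bool) × Θ) → ℝ) (hp : IsOutcome π p) :
    (n : ℝ) * (-(x * k) / (1 + x)) ≤ wundRC k x val p := by
  rw [wund_eq val π k x p hp hπ1]
  calc (n : ℝ) * (-(x * k) / (1 + x))
      = ∑ _i : Fin n, (-(x * k) / (1 + x)) := by
        rw [Finset.sum_const, Finset.card_univ, Fintype.card_fin, nsmul_eq_mul]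
    _ ≤ _ := Finset.sum_le_sum fun i _ =>
        max_lb k x _ _ hx (BB_nonneg hp.1 i)

/-- value under the two conditions -/
lemma wund_value (hn : 4 ≤ n) (hπ1 : ∑ θ, π θ = 1) (hx : 0 < x)
    (p : ((Fin n → Bool) × Θ) → ℝ) (hp : IsOutcome π p)
    (h1 : Piv val p = 0) (h2 : Suc val p = k / (1 + x)) :
    wundRC k x val p = (n : ℝ) * (-(x * k) / (1 + x)) := by
  have h1x : (0:ℝ) < 1 + x := by linarith
  have hpt := piv_pointwise val hp.1 h1
  rw [wund_eq val π k x p hp hπ1]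
  have hterm : ∀ i : Fin n,
      max (-x * AA val i p) (AA val i p + BB val i p - k) = -(x * k) / (1 + x) := by
    intro i
    rw [AA_eq_suc val i hpt, BB_eq_zero_of_piv val i hpt, h2]
    have e1 : -x * (k / (1 + x)) = -(x * k) / (1 + x) := by ring
    have e2 : k / (1 + x) + 0 - k = -(x * k) / (1 + x) := by
      field_simp; ring
    rw [e1, e2, max_self]
  rw [Finset.sum_congr rfl fun i _ => hterm i, Finset.sum_const,
    Finset.card_univ, Fintype.card_fin, nsmul_eq_mul]

end Value

section Witness
variable {n : ℕ} {Θ : Type} [Fintype Θ]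

noncomputable def qout (lam : ℝ) (π : Θ → ℝ) (y : (Fin n → Bool) × Θ) : ℝ :=
  if y.1 = (fun _ => true) then lam * π y.2
  else if y.1 = (fun _ => false) then (1 - lam) * π y.2 else 0

variable {lam : ℝ} {π : Θ → ℝ}

lemma qout_isOutcome (hn : 0 < n) (hlam0 : 0 ≤ lam) (hlam1 : lam ≤ 1)
    (hπ0 : ∀ θ, 0 ≤ π θ) :
    IsOutcome π (qout (n := n) lam π) := by
  constructor
  · intro y
    unfold qout
    split_ifs
    · exact mul_nonneg hlam0 (hπ0 y.2)
    · exact mul_nonneg (by linarith) (hπ0 y.2)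
    · exact le_refl 0
  · intro θ
    have hne : (fun _ : Fin n => true) ≠ (fun _ => false) := by
      intro h
      have := congrFun h ⟨0, hn⟩
      simp at this
    have hstep : ∀ a : Fin n → Bool, qout lam π (a, θ)
        = (if a = (fun _ => true) then lam * π θ else 0)
          + (if a = (fun _ => false) then (1 - lam) * π θ else 0) := by
      intro a
      unfold qout
      split_ifs with h1 h2 <;> simp_all
    rw [Finset.sum_congr rfl fun a _ => hstep a, Finset.sum_add_distrib,
      Finset.sum_ite_eq' univ, Finset.sum_ite_eq' univ]
    simp; ring

lemma qout_symm : SymmOutcome (qout (n := n) lam π) := by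
  intro φ a θ
  have key : ∀ c : Bool, (a ∘ φ = fun _ => c) ↔ (a = fun _ => c) := by
    intro c
    constructor
    · intro h
      funext j
      have := congrFun h (φ.symm j)
      simpa using this
    · intro h
      funext j
      exact congrFun h (φ j)
  unfold qout
  simp only [key]

lemma qout_piv (hn : 4 ≤ n) {val : Θ → ℕ} (hval : ∀ θ, 2 ≤ val θ ∧ val θ + 1 < n) :
    Piv val (qout (n := n) lam π) = 0 := by
  refine Finset.sum_eq_zero fun y _ => ?_
  split_ifs with h
  · obtain ⟨h1, h2⟩ := h
    have hv := hval y.2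
    unfold qout
    split_ifs with ha hb
    · exfalso; rw [ha, attackers_allTrue] at h2; omega
    · exfalso; rw [hb, attackers_allFalse] at h1; omega
    · rfl
  · rfl

lemma qout_suc (hn : 4 ≤ n) {val : Θ → ℕ} (hval : ∀ θ, 2 ≤ val θ ∧ val θ + 1 < n)
    (hπ1 : ∑ θ, π θ = 1) :
    Suc val (qout (n := n) lam π) = lam := by
  have hstep : ∀ y : (Fin n → Bool) × Θ,
      (if val y.2 < attackers y.1 then qout lam π y else 0)
      = (if y.1 = (fun _ => true) then lam * π y.2 else 0) := by
    intro y
    have hv := hval y.2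
    by_cases ha : y.1 = (fun _ => true)
    · rw [if_pos ha]
      rw [if_pos (by rw [ha, attackers_allTrue]; omega)]
      unfold qout; rw [if_pos ha]
    · rw [if_neg ha]
      split_ifs with h
      · unfold qout
        rw [if_neg ha]
        split_ifs with hb
        · exfalso; rw [hb, attackers_allFalse] at h; omega
        · rfl
      · rfl
  rw [Suc, Finset.sum_congr rfl fun y _ => hstep y, Fintype.sum_prod_type]
  have hinner : ∀ a : Fin n → Bool,
      (∑ θ : Θ, if a = (fun _ => true) then lam * π θ else 0)
      = if a = (fun _ => true) then lam else 0 := by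
    intro a
    split_ifs with h <;> simp [← Finset.mul_sum, hπ1]
  rw [Finset.sum_congr rfl fun a _ => hinner a, Finset.sum_ite_eq' univ]
  simp

end Witness

/-- in the regime change game, a symmetric outcome `p*`
minimizes the utilitarian uninformed welfare over all symmetric outcomes iff
(1) no investor is ever pivotal (the event `θ−1 ≤ Σ_i a_i ≤ θ` has
probability zero) and (2) the attack succeeds (`Σ_i a_i > θ` — recall that if
nobody is pivotal, success `Σ_i a_i ≥ θ` means strict excess) with probability
exactly `k/(1+x)`. -/
theorem stmt14 (n : ℕ) (hn : 4 ≤ n) {Θ : Type} [Fintype Θ]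
    (val : Θ → ℕ) (hvalinj : Function.Injective val)
    (hval : ∀ θ, 2 ≤ val θ ∧ val θ + 1 < n)
    (π : Θ → ℝ) (hπpos : ∀ θ, 0 < π θ) (hπ1 : ∑ θ, π θ = 1)
    (k x : ℝ) (hk0 : 0 < k) (hk1 : k < 1) (hx : 0 < x)
    (pstar : ((Fin n → Bool) × Θ) → ℝ)
    (hpstar : IsOutcome π pstar) (hpsym : SymmOutcome pstar) :
    (∀ p : ((Fin n → Bool) × Θ) → ℝ, IsOutcome π p → SymmOutcome p →
        wundRC k x val pstar ≤ wundRC k x val p) ↔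
    ((∑ y : (Fin n → Bool) × Θ,
        if val y.2 ≤ attackers y.1 + 1 ∧ attackers y.1 ≤ val y.2
        then pstar y else 0) = 0 ∧
     (∑ y : (Fin n → Bool) × Θ,
        if val y.2 < attackers y.1 then pstar y else 0) = k / (1 + x)) := by
  have h1x : (0:ℝ) < 1 + x := by linarith
  constructor
  · -- minimality implies the two conditions
    intro hmin
    set lam : ℝ := k / (1 + x) with hlam
    have hlam0 : 0 ≤ lam := div_nonneg hk0.le h1x.le
    have hlam1 : lam ≤ 1 := by
      rw [hlam, div_le_one h1x]; linarith
    have hq : IsOutcome π (qout (n := n) lam π) :=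
      qout_isOutcome (by omega) hlam0 hlam1 (fun θ => (hπpos θ).le)
    have hqval : wundRC k x val (qout (n := n) lam π)
        = (n : ℝ) * (-(x * k) / (1 + x)) :=
      wund_value hn hπ1 hx _ hq (qout_piv hn hval) (qout_suc hn hval hπ1)
    have hub : wundRC k x val pstar ≤ (n : ℝ) * (-(x * k) / (1 + x)) :=
      (hmin _ hq qout_symm).trans_eq hqval
    -- per-player extraction
    have hextract : ∀ i : Fin n,
        AA val i pstar = k / (1 + x) ∧ BB val i pstar = 0 := by
      intro i
      refine max_eq_extract k x _ _ hx (BB_nonneg hpstar.1 i) ?_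
      set f : Fin n → ℝ := fun j =>
        max (-x * AA val j pstar) (AA val j pstar + BB val j pstar - k) with hf
      have hflb : ∀ j : Fin n, -(x * k) / (1 + x) ≤ f j := fun j =>
        max_lb k x _ _ hx (BB_nonneg hpstar.1 j)
      have hsum : ∑ j : Fin n, f j ≤ (n : ℝ) * (-(x * k) / (1 + x)) := by
        rw [← wund_eq val π k x pstar hpstar hπ1]; exact hub
      have hsplit : f i + ∑ j ∈ univ.erase i, f j = ∑ j : Fin n, f j :=
        Finset.add_sum_erase _ _ (Finset.mem_univ i)
      have herase : ((n : ℝ) - 1) * (-(x * k) / (1 + x)) ≤ ∑ j ∈ univ.erase i, f j := by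
        have hcard : (univ.erase i).card = n - 1 := by
          rw [Finset.card_erase_of_mem (Finset.mem_univ i), Finset.card_univ,
            Fintype.card_fin]
        calc ((n : ℝ) - 1) * (-(x * k) / (1 + x))
            = ((n - 1 : ℕ) : ℝ) * (-(x * k) / (1 + x)) := by
              rw [Nat.cast_sub (by omega)]; norm_num
          _ = ∑ _j ∈ univ.erase i, (-(x * k) / (1 + x)) := by
              rw [Finset.sum_const, hcard, nsmul_eq_mul]
          _ ≤ _ := Finset.sum_le_sum fun j _ => hflb j
      have : f i ≤ -(x * k) / (1 + x) := by linarith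
      exact this
    have hpiv : Piv val pstar = 0 :=
      piv_zero_of_BB val hpstar.1 hn hval fun i => (hextract i).2
    have hsuc : Suc val pstar = k / (1 + x) := by
      have i0 : Fin n := ⟨0, by omega⟩
      rw [← AA_eq_suc val i0 (piv_pointwise val hpstar.1 hpiv)]
      exact (hextract i0).1
    exact ⟨hpiv, hsuc⟩
  · rintro ⟨h1, h2⟩
    intro p hp hsym
    have hval1 : wundRC k x val pstar = (n : ℝ) * (-(x * k) / (1 + x)) :=
      wund_value hn hπ1 hx pstar hpstar h1 h2
    rw [hval1]
    exact wund_lb hπ1 hx p hp
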